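/- Fundamental diagonal Möbius identity: for 0 < λ < 1, b = (1-λ)/(1+λ), and every x on the unit circle, M(S(x); λ) = S(L(x; b)), where S(x) = (x₁²-x₂², 2x₁x₂), L(x;b) = (x₁, bx₂)/√(x₁²+b²x₂²), and M(y;λ) = (2λ + (1+λ²)y₁, (1-λ²)y₂)/(1+λ²+2λy₁). -/

import Mathlib

/-- Squaring (angle-doubling) map on ℝ². -/
def circSquare (x : ℝ × ℝ) : ℝ × ℝ := (x.1 ^ 2 - x.2 ^ 2, 2 * x.1 * x.2)

/-- Rescaled diagonal linear transformation. -/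
noncomputable def rescaledLinear (x : ℝ × ℝ) (b : ℝ) : ℝ × ℝ :=
  (x.1 / Real.sqrt (x.1 ^ 2 + b ^ 2 * x.2 ^ 2),
   b * x.2 / Real.sqrt (x.1 ^ 2 + b ^ 2 * x.2 ^ 2))

/-- Diagonal Möbius transformation. -/
noncomputable def diagMobius (y : ℝ × ℝ) (lam : ℝ) : ℝ × ℝ :=
  ((2 * lam + (1 + lam ^ 2) * y.1) / (1 + lam ^ 2 + 2 * lam * y.1),
   ((1 - lam ^ 2) * y.2) / (1 + lam ^ 2 + 2 * lam * y.1))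

theorem fundamental_diag_mobius_identity (lam : ℝ) (h0 : 0 < lam) (h1 : lam < 1)
    (b : ℝ) (hb : b = (1 - lam) / (1 + lam))
    (x : ℝ × ℝ) (hx : x.1 ^ 2 + x.2 ^ 2 = 1) :
    diagMobius (circSquare x) lam = circSquare (rescaledLinear x b) := by
  obtain ⟨x1, x2⟩ := x
  simp only at hx
  have hl1 : (0:ℝ) < 1 + lam := by linarith
  have hbpos : 0 < b := by rw [hb]; exact div_pos (by linarith) hl1
  have hb1 : b < 1 := by rw [hb, div_lt_one hl1]; linarith
  have hb2 : b ^ 2 ≤ 1 := by nlinarith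
  have hbb : b * (1 + lam) = 1 - lam := by rw [hb]; field_simp
  have hD : 0 < x1 ^ 2 + b ^ 2 * x2 ^ 2 := by
    nlinarith [mul_nonneg (sub_nonneg.mpr hb2) (sq_nonneg x1), pow_pos hbpos 2,
      sq_nonneg x2]
  set s := Real.sqrt (x1 ^ 2 + b ^ 2 * x2 ^ 2) with hs
  have hspos : 0 < s := Real.sqrt_pos.mpr hD
  have hs2 : s ^ 2 = x1 ^ 2 + b ^ 2 * x2 ^ 2 := Real.sq_sqrt hD.le
  have hdenom : 1 + lam ^ 2 + 2 * lam * (x1 ^ 2 - x2 ^ 2) = (1 + lam) ^ 2 * s ^ 2 := by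
    rw [hs2]
    linear_combination -(1 + lam ^ 2) * hx - x2 ^ 2 * (b * (1 + lam) + (1 - lam)) * hbb
  simp only [diagMobius, circSquare, rescaledLinear, Prod.mk.injEq]
  have hsne : s ≠ 0 := ne_of_gt hspos
  constructor
  · have h1' : (x1 / s) ^ 2 - (b * x2 / s) ^ 2 = (x1 ^ 2 - b ^ 2 * x2 ^ 2) / s ^ 2 := by
      field_simp
    rw [hdenom, h1', div_eq_div_iff (by positivity) (by positivity)]
    linear_combination s ^ 2 * (-2 * lam * hx + x2 ^ 2 * (b * (1 + lam) + (1 - lam)) * hbb)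
  · have h2' : 2 * (x1 / s) * (b * x2 / s) = (2 * b * x1 * x2) / s ^ 2 := by
      field_simp
    rw [hdenom, h2', div_eq_div_iff (by positivity) (by positivity)]
    linear_combination s ^ 2 * (-2 * x1 * x2 * (1 + lam)) * hbb
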